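/- A permutation σ avoids 321 and satisfies ℓ(σ) ≤ 3 if and only if σ avoids 321 and avoids every permutation π of {1,…,m} with m ≤ 8 and ℓ(π) ≥ 4. (Equivalently: the Bruhat graph of σ is planar if and only if σ avoids 321 and all patterns of size at most 8 and length at least 4.) -/

import Mathlib

/-- The (Coxeter) length of a permutation: its number of inversions,
i.e. pairs `i < j` with `σ i > σ j`. -/
def invCount {m : ℕ} (σ : Equiv.Perm (Fin m)) : ℕ :=
  (Finset.univ.filter (fun p : Fin m × Fin m => p.1 < p.2 ∧ σ p.2 < σ p.1)).card

/-- `σ` pattern-contains `π`: there are indices `i_1 < ⋯ < i_k` such that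
`σ (i_a) < σ (i_b)` iff `π a < π b`. -/
def PatternContains {n k : ℕ} (σ : Equiv.Perm (Fin n)) (π : Equiv.Perm (Fin k)) : Prop :=
  ∃ f : Fin k ↪o Fin n, ∀ a b : Fin k, σ (f a) < σ (f b) ↔ π a < π b

/-- The pattern `321` (one-line notation `3 2 1`), as a permutation of `Fin 3`. -/
def perm321 : Equiv.Perm (Fin 3) := Equiv.swap 0 2

theorem invCount_le_of_contains {n k : ℕ} {σ : Equiv.Perm (Fin n)} {π : Equiv.Perm (Fin k)}
    (h : PatternContains σ π) : invCount π ≤ invCount σ := by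
  obtain ⟨f, hf⟩ := h
  apply Finset.card_le_card_of_injOn (fun p => (f p.1, f p.2))
  · intro p hp
    simp only [Finset.mem_coe, Finset.mem_filter, Finset.mem_univ, true_and] at hp ⊢
    exact ⟨f.lt_iff_lt.2 hp.1, (hf p.2 p.1).2 hp.2⟩
  · intro p _ q _ h
    have h1 : f p.1 = f q.1 := congrArg Prod.fst h
    have h2 : f p.2 = f q.2 := congrArg Prod.snd h
    exact Prod.ext (f.injective h1) (f.injective h2)

theorem exists_pattern_on {N : ℕ} (σ : Equiv.Perm (Fin N)) (S : Finset (Fin N)) :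
    ∃ π : Equiv.Perm (Fin S.card), PatternContains σ π ∧
      (Finset.univ.filter
        (fun p : Fin N × Fin N => p.1 ∈ S ∧ p.2 ∈ S ∧ p.1 < p.2 ∧ σ p.2 < σ p.1)).card
        ≤ invCount π := by
  set m := S.card with hmdef
  have hm : S.card = m := rfl
  set f : Fin m ↪o Fin N := S.orderEmbOfFin hm with hfdef
  have hmemS : ∀ a : Fin m, f a ∈ S := fun a => S.orderEmbOfFin_mem hm a
  set vals : Finset (Fin N) := Finset.univ.image (fun a : Fin m => σ (f a)) with hvals
  have hinjσf : Function.Injective (fun a : Fin m => σ (f a)) := fun a b h =>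
    f.injective (σ.injective h)
  have hv : vals.card = m := by
    rw [hvals, Finset.card_image_of_injective _ hinjσf, Finset.card_univ, Fintype.card_fin]
  set e : Fin m ≃o {x // x ∈ vals} := vals.orderIsoOfFin hv with hedef
  have hmem : ∀ a : Fin m, σ (f a) ∈ vals := by
    intro a; rw [hvals]; exact Finset.mem_image_of_mem _ (Finset.mem_univ a)
  set π₀ : Fin m → Fin m := fun a => e.symm ⟨σ (f a), hmem a⟩ with hπ₀
  have hinj : Function.Injective π₀ := by
    intro a b h
    have := e.symm.injective h
    have := Subtype.mk_eq_mk.1 this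
    exact hinjσf this
  set π : Equiv.Perm (Fin m) := Equiv.ofBijective π₀ (Finite.injective_iff_bijective.1 hinj)
    with hπdef
  have hπapp : ∀ a, π a = π₀ a := fun a => rfl
  have key : ∀ a b : Fin m, π a < π b ↔ σ (f a) < σ (f b) := by
    intro a b
    rw [hπapp, hπapp, hπ₀]
    simp only [e.symm.lt_iff_lt, Subtype.mk_lt_mk]
  refine ⟨π, ⟨f, fun a b => (key a b).symm⟩, ?_⟩
  apply Finset.card_le_card_of_surjOn (fun q : Fin m × Fin m => (f q.1, f q.2))
  intro p hp
  simp only [Finset.coe_filter, Set.mem_setOf_eq, Finset.mem_univ, true_and] at hp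
  obtain ⟨hp1, hp2, hlt, hinv⟩ := hp
  have h1 : p.1 ∈ Set.range f := by rw [Finset.range_orderEmbOfFin]; exact hp1
  have h2 : p.2 ∈ Set.range f := by rw [Finset.range_orderEmbOfFin]; exact hp2
  obtain ⟨a, ha⟩ := h1
  obtain ⟨b, hb⟩ := h2
  refine ⟨(a, b), ?_, ?_⟩
  · simp only [Finset.coe_filter, Set.mem_setOf_eq, Finset.mem_univ, true_and]
    constructor
    · exact f.lt_iff_lt.1 (by rw [ha, hb]; exact hlt)
    · exact (key b a).2 (by rw [ha, hb]; exact hinv)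
  · simp [ha, hb]

/-- Corollary 4.3: a permutation `σ` avoids `321` and has `ℓ(σ) ≤ 3` (equivalently, its
Bruhat graph is planar) iff `σ` avoids `321` and all permutations `π ∈ S_m` with
`m ≤ 8` and `ℓ(π) ≥ 4`. -/
theorem planar_iff_avoids_finite_list {N : ℕ} (σ : Equiv.Perm (Fin N)) :
    (¬ PatternContains σ perm321 ∧ invCount σ ≤ 3) ↔
      (¬ PatternContains σ perm321 ∧
        ∀ m ≤ 8, ∀ π : Equiv.Perm (Fin m), 4 ≤ invCount π → ¬ PatternContains σ π) := by
  constructor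
  · rintro ⟨h321, hl⟩
    refine ⟨h321, fun m _ π hπ hcon => ?_⟩
    have := invCount_le_of_contains hcon
    omega
  · rintro ⟨h321, h⟩
    refine ⟨h321, ?_⟩
    by_contra hl
    push_neg at hl
    have h4 : 4 ≤ invCount σ := hl
    obtain ⟨T, hTsub, hTcard⟩ := Finset.exists_subset_card_eq h4
    set S : Finset (Fin N) := T.image Prod.fst ∪ T.image Prod.snd with hS
    have hScard : S.card ≤ 8 := by
      calc S.card ≤ (T.image Prod.fst).card + (T.image Prod.snd).card :=
            Finset.card_union_le _ _
        _ ≤ T.card + T.card := Nat.add_le_add (Finset.card_image_le) (Finset.card_image_le)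
        _ = 8 := by rw [hTcard]
    obtain ⟨π, hcon, hle⟩ := exists_pattern_on σ S
    have hTsub' : T ⊆ Finset.univ.filter
        (fun p : Fin N × Fin N => p.1 ∈ S ∧ p.2 ∈ S ∧ p.1 < p.2 ∧ σ p.2 < σ p.1) := by
      intro p hp
      have hp' := hTsub hp
      simp only [Finset.mem_filter, Finset.mem_univ, true_and] at hp' ⊢
      refine ⟨?_, ?_, hp'.1, hp'.2⟩
      · exact Finset.mem_union_left _ (Finset.mem_image_of_mem _ hp)
      · exact Finset.mem_union_right _ (Finset.mem_image_of_mem _ hp)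
    have h4π : 4 ≤ invCount π := by
      calc 4 = T.card := hTcard.symm
        _ ≤ _ := Finset.card_le_card hTsub'
        _ ≤ invCount π := hle
    exact h S.card hScard π h4π hcon
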